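/- Let B = !![3, 4; 2, 3], φ = (1/4, 0) and ψ = (1/4, 1/2). Let ε, ε' ∈ {1, −1} and η, θ ∈ ℤ², and set φ' = ε·φ + η and ψ' = ε'·ψ + θ. Then for every coprime pair (p, q) ∈ ℤ² with (φ' − ψ')(B+I)·(p,q)ᵀ = 0, one has p·φ'₁ + q·φ'₂ ∈ (1/2)ℤ and p·ψ'₁ + q·ψ'₂ ∈ (1/2)ℤ, and for all r, s ∈ ℤ, φ'(B+I)·(r,s)ᵀ ∈ ℤ and ψ'(B+I)·(r,s)ᵀ ∈ ℤ. (Hence both ρ_{φ'} and ρ_{ψ'} are central when restricted to the boundary torus of the knot complement.) -/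
import Mathlib


/-- The row vector `φ(B+I)` for `B = !![a, b; c, d]`. -/
noncomputable def rowBI (a b c d : ℤ) (v : ℝ × ℝ) : ℝ × ℝ :=
  (((a : ℝ) + 1) * v.1 + (c : ℝ) * v.2, (b : ℝ) * v.1 + ((d : ℝ) + 1) * v.2)

/-- The pairing of a real row vector with an integer column vector `(p, q)ᵀ`. -/
noncomputable def dotZ (v : ℝ × ℝ) (p q : ℤ) : ℝ := v.1 * (p : ℝ) + v.2 * (q : ℝ)

/-- for `B = !![3, 4; 2, 3]`, `φ = (1/4, 0)`, `ψ = (1/4, 1/2)`, any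
conjugate representatives `φ' = ε φ + η`, `ψ' = ε' ψ + θ` and any coprime `(p, q)` with
`(φ' - ψ')(B+I)·(p,q)ᵀ = 0` satisfy `β_{φ'}, β_{ψ'} ∈ (1/2)ℤ` and `α_{φ'}, α_{ψ'} ∈ ℤ`;
hence both `ρ_{φ'}` and `ρ_{ψ'}` are central on the boundary torus of the knot
complement. -/
theorem example2_central_on_boundary (ε ε' : ℝ) (hε : ε = 1 ∨ ε = -1)
    (hε' : ε' = 1 ∨ ε' = -1) (η θ : ℤ × ℤ) :
    let φ' : ℝ × ℝ := (ε * (1 / 4) + (η.1 : ℝ), ε * 0 + (η.2 : ℝ))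
    let ψ' : ℝ × ℝ := (ε' * (1 / 4) + (θ.1 : ℝ), ε' * (1 / 2) + (θ.2 : ℝ))
    ∀ p q : ℤ, IsCoprime p q → dotZ (rowBI 3 4 2 3 (φ' - ψ')) p q = 0 →
      (∃ n : ℤ, (p : ℝ) * φ'.1 + (q : ℝ) * φ'.2 = (n : ℝ) / 2) ∧
      (∃ n : ℤ, (p : ℝ) * ψ'.1 + (q : ℝ) * ψ'.2 = (n : ℝ) / 2) ∧
      (∀ r s : ℤ, (∃ n : ℤ, dotZ (rowBI 3 4 2 3 φ') r s = (n : ℝ)) ∧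
        (∃ n : ℤ, dotZ (rowBI 3 4 2 3 ψ') r s = (n : ℝ))) := by
  intro φ' ψ' p q hpq h
  obtain ⟨e, he, heo⟩ : ∃ e : ℤ, (e : ℝ) = ε ∧ Odd e := by
    rcases hε with h1 | h1 <;> subst h1
    · exact ⟨1, by norm_num, ⟨0, by ring⟩⟩
    · exact ⟨-1, by norm_num, ⟨-1, by ring⟩⟩
  obtain ⟨e', he', heo'⟩ : ∃ e : ℤ, (e : ℝ) = ε' ∧ Odd e := by
    rcases hε' with h1 | h1 <;> subst h1
    · exact ⟨1, by norm_num, ⟨0, by ring⟩⟩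
    · exact ⟨-1, by norm_num, ⟨-1, by ring⟩⟩
  simp only [rowBI, dotZ, φ', ψ', Prod.fst_sub, Prod.snd_sub] at h ⊢
  rw [← he, ← he'] at h ⊢
  set M : ℤ := e - 2 * e' + 4 * (η.1 - θ.1) + 2 * (η.2 - θ.2) with hM
  set N : ℤ := e - 3 * e' + 4 * (η.1 - θ.1) + 4 * (η.2 - θ.2) with hN
  have hInt : M * p + N * q = 0 := by
    have : ((M * p + N * q : ℤ) : ℝ) = 0 := by push_cast [hM, hN]; linarith [h]
    exact_mod_cast this
  have hModd : Odd M := by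
    obtain ⟨m, hm⟩ := heo; obtain ⟨m', hm'⟩ := heo'
    exact ⟨m - e' + 2 * (η.1 - θ.1) + (η.2 - θ.2), by omega⟩
  have hNeven : Even N := by
    obtain ⟨m, hm⟩ := heo; obtain ⟨m', hm'⟩ := heo'
    exact ⟨m - 3 * m' - 1 + 2 * (η.1 - θ.1) + 2 * (η.2 - θ.2), by omega⟩
  have hpe : Even p := by
    have h1 : Even (M * p) := by
      rw [show M * p = -(N * q) by linarith]
      exact (hNeven.mul_right q).neg
    rcases Int.even_mul.mp h1 with h2 | h2
    · exact absurd h2 (Int.not_even_iff_odd.mpr hModd)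
    · exact h2
  obtain ⟨k, hk⟩ := hpe
  subst hk
  refine ⟨⟨e * k + 2 * (k + k) * η.1 + 2 * q * η.2, by push_cast; ring⟩,
    ⟨e' * k + e' * q + 2 * (k + k) * θ.1 + 2 * q * θ.2, by push_cast; ring⟩,
    fun r s => ⟨⟨(e + 4 * η.1 + 2 * η.2) * r + (e + 4 * η.1 + 4 * η.2) * s, by
      push_cast; ring⟩,
    ⟨(2 * e' + 4 * θ.1 + 2 * θ.2) * r + (3 * e' + 4 * θ.1 + 4 * θ.2) * s, by
      push_cast; ring⟩⟩⟩
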